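/- Let D ⊆ V be a coherent set of desirable options and o an interior point of the positive cone. With u_o(x) := sup{α ∈ ℝ : x - αo ∈ D}, one has {x ∈ V : u_o(x) > 0} = int(D), the topological interior of D. -/

import Mathlib

theorem stmt10 {V : Type*} [NormedAddCommGroup V] [NormedSpace ℝ V] [CompleteSpace V]
    (gt : V → V → Prop)
    (hirr : ∀ x : V, ¬ gt x x)
    (htrans : ∀ x y z : V, gt x y → gt y z → gt x z)
    (haddc : ∀ x y z : V, gt x y → gt (x + z) (y + z))
    (hsmulc : ∀ (x y : V) (c : ℝ), 0 < c → gt x y → gt (c • x) (c • y))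
    (hdual : ∃ f : V →L[ℝ] ℝ, ∀ x : V, gt x 0 → 0 < f x)
    (D : Set V)
    (hD0 : (0 : V) ∉ D)
    (hDcone : ∀ x ∈ D, ∀ y ∈ D, ∀ l m : ℝ, 0 ≤ l → 0 ≤ m → 0 < l + m → l • x + m • y ∈ D)
    (hDpos : {x : V | gt x 0} ⊆ D)
    (o : V) (ho : o ∈ interior {x : V | gt x 0}) :
    {x : V | 0 < sSup {α : ℝ | x - α • o ∈ D}} = interior D := by
  have hoP : o ∈ {x : V | gt x 0} := interior_subset ho
  have honz : (0:ℝ) < ‖o‖ := by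
    rw [norm_pos_iff]
    rintro rfl; exact hirr 0 hoP
  obtain ⟨δ, hδ, hball⟩ : ∃ δ > 0, Metric.ball o δ ⊆ {x : V | gt x 0} := by
    rw [mem_interior_iff_mem_nhds, Metric.mem_nhds_iff] at ho
    obtain ⟨δ, hδ, h⟩ := ho; exact ⟨δ, hδ, h⟩
  have hDneg : ∀ d ∈ D, ¬ gt (-d) 0 := by
    intro d hd h
    have : (1:ℝ) • d + (1:ℝ) • (-d) ∈ D :=
      hDcone d hd (-d) (hDpos h) 1 1 zero_le_one zero_le_one (by norm_num)
    simp at this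
    exact hD0 this
  have hbdd : ∀ x : V, ∀ α ∈ {α : ℝ | x - α • o ∈ D}, α ≤ max 0 (‖x‖/δ) := by
    intro x α hα
    rcases le_or_gt α 0 with h | h
    · exact h.trans (le_max_left _ _)
    refine le_max_of_le_right ?_
    by_contra hc
    push_neg at hc
    have hxδ : ‖α⁻¹ • x‖ < δ := by
      rw [norm_smul, norm_inv, Real.norm_eq_abs, abs_of_pos h]
      rw [div_lt_iff₀ hδ] at hc
      rw [inv_mul_lt_iff₀ h]
      linarith
    have hgt : gt (o - α⁻¹ • x) 0 := hball (by
      simpa [Metric.mem_ball, dist_eq_norm, norm_sub_rev] using hxδ)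
    have hgt2 : gt (α • (o - α⁻¹ • x)) 0 := by
      have := hsmulc _ 0 α h hgt
      simpa using this
    have heq : α • (o - α⁻¹ • x) = -(x - α • o) := by
      rw [smul_sub, smul_smul, mul_inv_cancel₀ h.ne', one_smul]
      abel
    exact hDneg _ hα (heq ▸ hgt2)
  ext x
  simp only [Set.mem_setOf_eq]
  constructor
  · intro h
    have hne : {α : ℝ | x - α • o ∈ D}.Nonempty := by
      by_contra hne
      rw [Set.not_nonempty_iff_eq_empty] at hne
      rw [hne, Real.sSup_empty] at h
      exact lt_irrefl 0 h
    obtain ⟨α, hα, hαpos⟩ := exists_lt_of_lt_csSup hne h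
    rw [mem_interior]
    refine ⟨Metric.ball x (α*δ), ?_, Metric.isOpen_ball, Metric.mem_ball_self (by positivity)⟩
    intro y hy
    have hmem : o + α⁻¹ • (y - x) ∈ {z : V | gt z 0} := hball (by
      rw [Metric.mem_ball, dist_eq_norm]
      simp only [add_sub_cancel_left]
      rw [norm_smul, norm_inv, Real.norm_eq_abs, abs_of_pos hαpos]
      rw [Metric.mem_ball, dist_eq_norm] at hy
      rw [inv_mul_lt_iff₀ hαpos]
      linarith)
    have hD' := hDcone _ hα _ (hDpos hmem) 1 α zero_le_one hαpos.le (by positivity)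
    have heq : (1:ℝ) • (x - α • o) + α • (o + α⁻¹ • (y - x)) = y := by
      rw [one_smul, smul_add, smul_smul, mul_inv_cancel₀ hαpos.ne', one_smul]
      abel
    rwa [heq] at hD'
  · intro h
    rw [mem_interior_iff_mem_nhds, Metric.mem_nhds_iff] at h
    obtain ⟨ε, hε, hb⟩ := h
    set α := ε / (2 * ‖o‖) with hαdef
    have hαpos : 0 < α := by positivity
    have hmem : α ∈ {α : ℝ | x - α • o ∈ D} := by
      apply hb
      rw [Metric.mem_ball, dist_eq_norm]
      have heq : x - α • o - x = -(α • o) := by abel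
      rw [heq, norm_neg, norm_smul, Real.norm_eq_abs, abs_of_pos hαpos]
      have hval : α * ‖o‖ = ε / 2 := by
        rw [hαdef]; field_simp
      rw [hval]; linarith
    calc (0:ℝ) < α := hαpos
    _ ≤ sSup {α : ℝ | x - α • o ∈ D} := le_csSup ⟨max 0 (‖x‖/δ), hbdd x⟩ hmem
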